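/- Assume the buyer distribution is regular, let s ∈ ℝ be a seller cost, and suppose there exists some k with φ(β_k) > s. Let k* = min{k : φ(β_k) > s}. Then: (i) for every posted price q ∈ ℝ, (q − s)·Σ_{r : β_r ≥ q} f(β_r) ≤ (β_{k*} − s)·Σ_{r=k*}^{K} f(β_r), i.e., β_{k*} is a revenue-optimal posted price for the seller; and (ii) (β_{k*} − s)·Σ_{r=k*}^{K} f(β_r) = Σ_{r=1}^{K} (φ(β_r) − s)·𝟙[φ(β_r) > s]·f(β_r). -/

import Mathlib

open Finset

/-- The buyer's Myerson virtual value: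
`φ(β_r) = β_r − (β_{r+1} − β_r)·(Σ_{l>r} f(β_l))/f(β_r)` for `r < K-1`, and
`φ(β_{K-1}) = β_{K-1}`. -/
noncomputable def buyerVirtual (K : ℕ) (β f : Fin K → ℝ) (r : Fin K) : ℝ :=
  β r - ((if h : (r : ℕ) + 1 < K then β ⟨(r : ℕ) + 1, h⟩ else β r) - β r)
      * (∑ l ∈ Finset.Ioi r, f l) / f r


lemma Ioi_castSucc_eq {n : ℕ} (i : Fin n) :
    (Finset.Ioi (i.castSucc) : Finset (Fin (n+1))) = Finset.Ici i.succ := by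
  ext r
  simp only [Finset.mem_Ioi, Finset.mem_Ici, Fin.lt_def, Fin.le_def,
    Fin.coe_castSucc, Fin.val_succ]
  omega

lemma key_sum {n : ℕ} (β f : Fin (n+1) → ℝ) (hf : ∀ r, 0 < f r) (s : ℝ)
    (k : Fin (n+1)) :
    ∑ r ∈ Finset.Ici k, (buyerVirtual (n+1) β f r - s) * f r
      = (β k - s) * ∑ r ∈ Finset.Ici k, f r := by
  induction k using Fin.reverseInduction with
  | last =>
      have h1 : (Finset.Ici (Fin.last n) : Finset (Fin (n+1))) = {Fin.last n} := by
        ext r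
        simp [Fin.le_def, Fin.last, Fin.le_last, le_antisymm_iff]
        omega
      have h2 : buyerVirtual (n+1) β f (Fin.last n) = β (Fin.last n) := by
        simp [buyerVirtual, Fin.last]
      simp [h1, h2]
  | cast i ih =>
      have hlt : i.castSucc < i.succ := Fin.castSucc_lt_succ
      have hins : (Finset.Ici i.castSucc : Finset (Fin (n+1)))
          = insert i.castSucc (Finset.Ioi i.castSucc) := by
        rw [Finset.Ioi_insert]
      have hnotmem : i.castSucc ∉ (Finset.Ioi i.castSucc : Finset (Fin (n+1))) := by
        simp
      have hIoi := Ioi_castSucc_eq i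
      have hφ : buyerVirtual (n+1) β f i.castSucc
          = β i.castSucc - (β i.succ - β i.castSucc)
              * (∑ l ∈ Finset.Ici i.succ, f l) / f i.castSucc := by
        have hc : (i.castSucc : ℕ) + 1 < n + 1 := by
          simp only [Fin.coe_castSucc]; omega
        have : (⟨(i.castSucc : ℕ) + 1, hc⟩ : Fin (n+1)) = i.succ := by
          ext; simp
        simp only [buyerVirtual, dif_pos hc, this, hIoi]
      have hfne : f i.castSucc ≠ 0 := (hf _).ne'
      rw [hins, Finset.sum_insert hnotmem, Finset.sum_insert hnotmem, hIoi, ih, hφ]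
      field_simp
      ring

/-- for a regular buyer distribution and a seller cost `s` such that some
virtual value exceeds `s`, with `k* = min{k : φ(β_k) > s}`:
(i) the price `β_{k*}` maximizes `(q − s)·Pr[b ≥ q]` over all posted prices `q ∈ ℝ`;
(ii) `(β_{k*} − s)·Σ_{r ≥ k*} f(β_r) = Σ_r (φ(β_r) − s)·𝟙[φ(β_r) > s]·f(β_r)`. -/
theorem stmt_2 (K : ℕ) (β f : Fin K → ℝ)
    (hβ : StrictMono β)
    (hf : ∀ r, 0 < f r)
    (hf1 : ∑ r, f r = 1)
    (hreg : Monotone (buyerVirtual K β f))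
    (s : ℝ)
    (kstar : Fin K)
    (hks : s < buyerVirtual K β f kstar)
    (hmin : ∀ k : Fin K, s < buyerVirtual K β f k → kstar ≤ k) :
    (∀ q : ℝ,
      (q - s) * ∑ r ∈ Finset.univ.filter (fun r => q ≤ β r), f r
        ≤ (β kstar - s) * ∑ r ∈ Finset.Ici kstar, f r)
    ∧ (β kstar - s) * ∑ r ∈ Finset.Ici kstar, f r
        = ∑ r : Fin K, (buyerVirtual K β f r - s)
            * (if s < buyerVirtual K β f r then 1 else 0) * f r := by
  cases K with
  | zero => exact kstar.elim0
  | succ n =>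
  set φ := buyerVirtual (n+1) β f with hφdef
  -- characterization of the set where φ > s
  have hiff : ∀ r : Fin (n+1), s < φ r ↔ kstar ≤ r := by
    intro r
    constructor
    · exact hmin r
    · intro h; exact lt_of_lt_of_le hks (hreg h)
  have hpos : ∀ r ∈ Finset.Ici kstar, 0 ≤ (φ r - s) * f r := by
    intro r hr
    have : s < φ r := (hiff r).2 (Finset.mem_Ici.mp hr)
    exact mul_nonneg (by linarith) (hf r).le
  have hneg : ∀ r : Fin (n+1), r ∉ Finset.Ici kstar → (φ r - s) * f r ≤ 0 := by
    intro r hr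
    have h1 : ¬ s < φ r := fun h => hr (Finset.mem_Ici.mpr ((hiff r).1 h))
    exact mul_nonpos_of_nonpos_of_nonneg (by push_neg at h1; linarith) (hf r).le
  have hkey := key_sum β f hf s
  -- the optimal expected revenue
  have hstar : (β kstar - s) * ∑ r ∈ Finset.Ici kstar, f r
      = ∑ r ∈ Finset.Ici kstar, (φ r - s) * f r := (hkey kstar).symm
  -- any Ici sum is at most the kstar one
  have hbest : ∀ k : Fin (n+1),
      ∑ r ∈ Finset.Ici k, (φ r - s) * f r
        ≤ ∑ r ∈ Finset.Ici kstar, (φ r - s) * f r := by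
    intro k
    have hsplit : ∑ r ∈ Finset.Ici k, (φ r - s) * f r
        = ∑ r ∈ (Finset.Ici k ∩ Finset.Ici kstar), (φ r - s) * f r
          + ∑ r ∈ (Finset.Ici k \ Finset.Ici kstar), (φ r - s) * f r := by
      rw [← Finset.sum_inter_add_sum_sdiff]
    rw [hsplit]
    have h1 : ∑ r ∈ (Finset.Ici k ∩ Finset.Ici kstar), (φ r - s) * f r
        ≤ ∑ r ∈ Finset.Ici kstar, (φ r - s) * f r :=
      Finset.sum_le_sum_of_subset_of_nonneg Finset.inter_subset_right
        (fun r hr _ => hpos r hr)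
    have h2 : ∑ r ∈ (Finset.Ici k \ Finset.Ici kstar), (φ r - s) * f r ≤ 0 :=
      Finset.sum_nonpos (fun r hr => hneg r (Finset.mem_sdiff.mp hr).2)
    linarith
  constructor
  · -- part (i)
    intro q
    rcases (Finset.univ.filter (fun r => q ≤ β r)).eq_empty_or_nonempty with he | hne
    · rw [he]
      simp only [Finset.sum_empty, mul_zero]
      rw [hstar]
      exact Finset.sum_nonneg hpos
    · set k := (Finset.univ.filter (fun r => q ≤ β r)).min' hne with hk
      have hkmem : k ∈ Finset.univ.filter (fun r => q ≤ β r) := Finset.min'_mem _ _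
      have hqk : q ≤ β k := (Finset.mem_filter.mp hkmem).2
      have hSeq : Finset.univ.filter (fun r => q ≤ β r) = Finset.Ici k := by
        ext r
        simp only [Finset.mem_filter, Finset.mem_univ, true_and, Finset.mem_Ici]
        constructor
        · intro h; exact Finset.min'_le _ _ (Finset.mem_filter.mpr ⟨Finset.mem_univ r, h⟩)
        · intro h; exact le_trans hqk (hβ.monotone h)
      rw [hSeq]
      have hT : 0 ≤ ∑ r ∈ Finset.Ici k, f r :=
        Finset.sum_nonneg (fun r _ => (hf r).le)
      calc (q - s) * ∑ r ∈ Finset.Ici k, f r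
          ≤ (β k - s) * ∑ r ∈ Finset.Ici k, f r :=
            mul_le_mul_of_nonneg_right (by linarith) hT
        _ = ∑ r ∈ Finset.Ici k, (φ r - s) * f r := (hkey k).symm
        _ ≤ ∑ r ∈ Finset.Ici kstar, (φ r - s) * f r := hbest k
        _ = (β kstar - s) * ∑ r ∈ Finset.Ici kstar, f r := hkey kstar
  · -- part (ii)
    rw [hstar]
    have : ∀ r : Fin (n+1), (φ r - s) * (if s < φ r then 1 else 0) * f r
        = if kstar ≤ r then (φ r - s) * f r else 0 := by
      intro r
      by_cases h : s < φ r
      · rw [if_pos h, if_pos ((hiff r).1 h)]; ring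
      · rw [if_neg h, if_neg (fun hle => h ((hiff r).2 hle))]; ring
    rw [Finset.sum_congr rfl (fun r _ => this r)]
    simp only [← Finset.mem_Ici]
    rw [Finset.sum_ite_mem, Finset.univ_inter]
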